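/- For strategy-proof own-peak-only rules φ and ψ whose option sets are boxes (products of closed intervals), φ dominates ψ if and only if for each agent i and each subprofile R_{-i}, the option set of ψ is contained in the option set of φ: O_i^ψ(R_{-i}) ⊆ O_i^φ(R_{-i}). -/

import Mathlib

open Finset

/-- Membership in the consumption set `X = ∏_ℓ [0, Ω^ℓ]`. -/
def InBox {L : Type*} (Ω : L → ℝ) (x : L → ℝ) : Prop :=
  ∀ ℓ, 0 ≤ x ℓ ∧ x ℓ ≤ Ω ℓ

/-- `b` is between `a` and `c`: coordinatewise `a^ℓ ≤ b^ℓ ≤ c^ℓ` or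
`a^ℓ ≥ b^ℓ ≥ c^ℓ`. -/
def Between {L : Type*} (a b c : L → ℝ) : Prop :=
  ∀ ℓ, (a ℓ ≤ b ℓ ∧ b ℓ ≤ c ℓ) ∨ (c ℓ ≤ b ℓ ∧ b ℓ ≤ a ℓ)

/-- A multidimensional single-peaked preference on the box `∏_ℓ [0, Ω^ℓ]`:
a complete and transitive relation with a peak `p` such that any bundle
strictly between the peak and another bundle is strictly preferred to it. -/
structure Pref (L : Type*) (Ω : L → ℝ) where
  rel : (L → ℝ) → (L → ℝ) → Prop
  total : ∀ x y, InBox Ω x → InBox Ω y → rel x y ∨ rel y x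
  trans : ∀ x y z, rel x y → rel y z → rel x z
  peak : L → ℝ
  peak_mem : InBox Ω peak
  singlePeaked : ∀ x y, InBox Ω x → InBox Ω y → x ≠ y →
    Between peak x y → rel x y ∧ ¬ rel y x

/-- The option set of agent `i` left open by `R_{-i}` under `φ`. -/
def OptionSet {N L : Type*} [DecidableEq N] {Ω : L → ℝ}
    (φ : (N → Pref L Ω) → N → L → ℝ) (R : N → Pref L Ω) (i : N) :
    Set (L → ℝ) :=
  {x | ∃ Ri : Pref L Ω, φ (Function.update R i Ri) i = x}

/-- Strategy-proofness. -/
def StrategyProof {N L : Type*} [DecidableEq N] {Ω : L → ℝ}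
    (φ : (N → Pref L Ω) → N → L → ℝ) : Prop :=
  ∀ (R : N → Pref L Ω) (i : N) (Ri' : Pref L Ω),
    (R i).rel (φ R i) (φ (Function.update R i Ri') i)

/-- Own-peak-onliness. -/
def OwnPeakOnly {N L : Type*} [DecidableEq N] {Ω : L → ℝ}
    (φ : (N → Pref L Ω) → N → L → ℝ) : Prop :=
  ∀ (R : N → Pref L Ω) (i : N) (Ri' : Pref L Ω),
    Ri'.peak = (R i).peak → φ R i = φ (Function.update R i Ri') i

/-- A set is a nonempty box: a product of closed intervals. -/
def IsBox {L : Type*} (S : Set (L → ℝ)) : Prop :=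
  ∃ a b : L → ℝ, (∀ ℓ, a ℓ ≤ b ℓ) ∧
    S = {x | ∀ ℓ, a ℓ ≤ x ℓ ∧ x ℓ ≤ b ℓ}

/-- Domination between rules. -/
def Dominates {N L : Type*} {Ω : L → ℝ}
    (φ ψ : (N → Pref L Ω) → N → L → ℝ) : Prop :=
  ∀ (R : N → Pref L Ω) (i : N), (R i).rel (φ R i) (ψ R i)

lemma between_refl_left' {L : Type*} (p z : L → ℝ) : Between p p z := by
  intro ℓ
  rcases le_total (p ℓ) (z ℓ) with h | h
  · exact Or.inl ⟨le_rfl, h⟩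
  · exact Or.inr ⟨h, le_rfl⟩

lemma between_isPartialOrder {L : Type*} (p : L → ℝ) :
    IsPartialOrder (L → ℝ) (Between p) where
  refl x := by
    intro ℓ; rcases le_total (p ℓ) (x ℓ) with h | h
    · exact Or.inl ⟨h, le_rfl⟩
    · exact Or.inr ⟨le_rfl, h⟩
  trans x y z hxy hyz := by
    intro ℓ
    rcases hxy ℓ with ⟨h1, h2⟩ | ⟨h1, h2⟩ <;> rcases hyz ℓ with ⟨h3, h4⟩ | ⟨h3, h4⟩
    · exact Or.inl ⟨h1, le_trans h2 h4⟩
    · exact Or.inr ⟨by linarith, by linarith⟩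
    · exact Or.inl ⟨by linarith, by linarith⟩
    · exact Or.inr ⟨le_trans h3 h1, h2⟩
  antisymm x y hxy hyx := by
    funext ℓ
    rcases hxy ℓ with ⟨h1, h2⟩ | ⟨h1, h2⟩ <;> rcases hyx ℓ with ⟨h3, h4⟩ | ⟨h3, h4⟩ <;> linarith

/-- For every peak `p` in the box there is an admissible single-peaked
preference whose relation holds only between points of the box. -/
lemma exists_guarded_pref {L : Type*} (Ω : L → ℝ) (p : L → ℝ) (hp : InBox Ω p) :
    ∃ Rp : Pref L Ω, Rp.peak = p ∧ ∀ x y, Rp.rel x y → InBox Ω x ∧ InBox Ω y := by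
  haveI := between_isPartialOrder p
  obtain ⟨s, hlin, hsub⟩ := extend_partialOrder (Between p)
  refine ⟨{
    rel := fun x y => InBox Ω x ∧ InBox Ω y ∧ s x y
    total := fun x y hx hy => by
      rcases hlin.toTotal.total x y with h | h
      · exact Or.inl ⟨hx, hy, h⟩
      · exact Or.inr ⟨hy, hx, h⟩
    trans := fun x y z ⟨hx, hy, h1⟩ ⟨_, hz, h2⟩ =>
      ⟨hx, hz, hlin.toIsPartialOrder.toIsPreorder.toIsTrans.trans x y z h1 h2⟩
    peak := p
    peak_mem := hp
    singlePeaked := fun x y hx hy hne hbtw => by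
      have hxy : s x y := hsub x y hbtw
      refine ⟨⟨hx, hy, hxy⟩, fun ⟨_, _, hyx⟩ => hne ?_⟩
      exact hlin.toIsPartialOrder.toAntisymm.antisymm x y hxy hyx
  }, rfl, fun x y h => ⟨h.1, h.2.1⟩⟩

/-- All outputs of a strategy-proof, own-peak-only rule lie in the box. -/
lemma output_inBox {N L : Type*} [DecidableEq N] {Ω : L → ℝ}
    (χ : (N → Pref L Ω) → N → L → ℝ) (hSP : StrategyProof χ) (hOPO : OwnPeakOnly χ)
    (R : N → Pref L Ω) (j : N) : InBox Ω (χ R j) := by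
  obtain ⟨Rp, hpeak, hguard⟩ := exists_guarded_pref Ω (R j).peak (R j).peak_mem
  have h1 : χ R j = χ (Function.update R j Rp) j := hOPO R j Rp hpeak
  have h2 := hSP (Function.update R j Rp) j Rp
  rw [Function.update_idem, Function.update_self] at h2
  rw [h1]
  exact (hguard _ _ h2).1

/-- If `p` lies in the option set, reporting a preference with peak `p`
yields `p`. -/
lemma output_eq_of_mem {N L : Type*} [DecidableEq N] {Ω : L → ℝ}
    (χ : (N → Pref L Ω) → N → L → ℝ) (hSP : StrategyProof χ)
    (hout : ∀ R j, InBox Ω (χ R j))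
    (R : N → Pref L Ω) (i : N) (p : L → ℝ) (hpX : InBox Ω p)
    (hpO : p ∈ OptionSet χ R i) (Rp : Pref L Ω) (hpeak : Rp.peak = p) :
    χ (Function.update R i Rp) i = p := by
  obtain ⟨Rq, hq⟩ := hpO
  have h2 := hSP (Function.update R i Rp) i Rq
  rw [Function.update_idem, hq, Function.update_self] at h2
  by_contra hne
  have hb : Between Rp.peak p (χ (Function.update R i Rp) i) := by
    rw [hpeak]; exact between_refl_left' _ _
  exact (Rp.singlePeaked p _ hpX (hout _ _) (Ne.symm hne) hb).2 h2

/-- For strategy-proof, own-peak-only rules with box option sets, `φ`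
dominates `ψ` iff every option set of `ψ` is contained in the corresponding
option set of `φ`. -/
theorem dominates_iff_option_subset {N L : Type*} [DecidableEq N] (Ω : L → ℝ)
    (φ ψ : (N → Pref L Ω) → N → L → ℝ)
    (hSPφ : StrategyProof φ) (hOPOφ : OwnPeakOnly φ)
    (hSPψ : StrategyProof ψ) (hOPOψ : OwnPeakOnly ψ)
    (hboxφ : ∀ (R : N → Pref L Ω) (i : N), IsBox (OptionSet φ R i))
    (hboxψ : ∀ (R : N → Pref L Ω) (i : N), IsBox (OptionSet ψ R i))
    (hrich : ∀ x : L → ℝ, InBox Ω x → ∃ Ri : Pref L Ω, Ri.peak = x) :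
    Dominates φ ψ ↔
      ∀ (R : N → Pref L Ω) (i : N),
        OptionSet ψ R i ⊆ OptionSet φ R i := by
  constructor
  · intro hdom R i x hx
    have houtφ := output_inBox φ hSPφ hOPOφ
    have houtψ := output_inBox ψ hSPψ hOPOψ
    obtain ⟨a, b, hab, hSψ⟩ := hboxψ R i
    -- key: every point of the box `X` in `OptionSet ψ R i` is in `OptionSet φ R i`
    have key : ∀ q, InBox Ω q → q ∈ OptionSet ψ R i → q ∈ OptionSet φ R i := by
      intro q hqX hqO
      obtain ⟨Rq, hpeak, _⟩ := exists_guarded_pref Ω q hqX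
      have hψq : ψ (Function.update R i Rq) i = q :=
        output_eq_of_mem ψ hSPψ houtψ R i q hqX hqO Rq hpeak
      have hd := hdom (Function.update R i Rq) i
      rw [Function.update_self, hψq] at hd
      have hwO : φ (Function.update R i Rq) i ∈ OptionSet φ R i := ⟨Rq, rfl⟩
      have hwq : φ (Function.update R i Rq) i = q := by
        by_contra hne
        have hb : Between Rq.peak q (φ (Function.update R i Rq) i) := by
          rw [hpeak]; exact between_refl_left' _ _
        exact (Rq.singlePeaked q _ hqX (houtφ _ _) (Ne.symm hne) hb).2 hd
      rw [← hwq]; exact hwO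
    have haO : a ∈ OptionSet ψ R i := by
      rw [hSψ]; exact fun ℓ => ⟨le_rfl, hab ℓ⟩
    have hbO : b ∈ OptionSet ψ R i := by
      rw [hSψ]; exact fun ℓ => ⟨hab ℓ, le_rfl⟩
    have haX : InBox Ω a := by
      obtain ⟨Ra', ha'⟩ := haO; rw [← ha']; exact houtψ _ _
    have hbX : InBox Ω b := by
      obtain ⟨Rb', hb'⟩ := hbO; rw [← hb']; exact houtψ _ _
    have haφ := key a haX haO
    have hbφ := key b hbX hbO
    obtain ⟨c, d, hcd, hSφ⟩ := hboxφ R i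
    rw [hSφ] at haφ hbφ ⊢
    rw [hSψ] at hx
    exact fun ℓ => ⟨le_trans (haφ ℓ).1 (hx ℓ).1, le_trans (hx ℓ).2 (hbφ ℓ).2⟩
  · intro hsub R i
    have hmem : ψ R i ∈ OptionSet ψ R i := ⟨R i, by rw [Function.update_eq_self]⟩
    obtain ⟨Ri', h⟩ := hsub R i hmem
    have := hSPφ R i Ri'
    rwa [h] at this
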